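/- Let a be a leaf label and b an inner node label, and let φ be a first-order sentence over forests of the form ∃x₁…xᵢ ∀y₁…yⱼ ψ(x₁,…,xᵢ,y₁,…,yⱼ) with ψ quantifier-free, in the signature with unary label predicates and the strict ancestor order. Let n > i + j. If the forest n(ba) satisfies φ, then so does the forest n(ba) + a. -/
import Mathlib


/- One-sorted trees and (possibly empty) forests over a single alphabet `A`. -/
mutual
inductive OTree (A : Type) : Type where
  | node (a : A) (f : OForest A) : OTree A
inductive OForest (A : Type) : Type where
  | nil : OForest A
  | cons (t : OTree A) (f : OForest A) : OForest A
end

def OForest.append {A : Type} : OForest A → OForest A → OForest A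
  | .nil, f => f
  | .cons t f', f => .cons t (f'.append f)

def OForest.toList {A : Type} : OForest A → List (OTree A)
  | .nil => []
  | .cons t f => t :: f.toList

def OTree.children {A : Type} : OTree A → List (OTree A)
  | .node _ f => f.toList

def OTree.rootLabel {A : Type} : OTree A → A
  | .node a _ => a

def OTree.subtreeAt {A : Type} : List ℕ → OTree A → Option (OTree A)
  | [], t => some t
  | i :: p, t =>
    match t.children[i]? with
    | some c => OTree.subtreeAt p c
    | none => none

/-- Nodes of a one-sorted forest are nonempty paths: the head picks a tree of the forest. -/
def OForest.subtreeAt {A : Type} (f : OForest A) : List ℕ → Option (OTree A)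
  | [] => none
  | i :: p =>
    match f.toList[i]? with
    | some t => OTree.subtreeAt p t
    | none => none

/-- The label of the node `x` of the one-sorted forest `f`, if `x` is a valid node. -/
def OForest.labelAt {A : Type} (f : OForest A) (x : List ℕ) : Option A :=
  (f.subtreeAt x).map OTree.rootLabel

/- One-sorted contexts: one-sorted forests with exactly one leaf replaced by the hole `□`
(the empty context is `□` itself). -/
mutual
inductive OCTree (A : Type) : Type where
  | hole : OCTree A
  | node (a : A) (c : OContext A) : OCTree A
inductive OContext (A : Type) : Type where
  | mk (l : OForest A) (c : OCTree A) (r : OForest A) : OContext A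
end

/- Substitution of a one-sorted forest into the hole of a one-sorted context. -/
mutual
def OCTree.subst {A : Type} : OCTree A → OForest A → OForest A
  | .hole, f => f
  | .node a c, f => .cons (.node a (c.subst f)) .nil
def OContext.subst {A : Type} : OContext A → OForest A → OForest A
  | .mk l c r, f => l.append ((c.subst f).append r)
end

/- A one-sorted morphism assigns to each letter of the source alphabet a (possibly empty)
one-sorted context over the target alphabet; it extends uniquely to all one-sorted forests:
the image of a tree `a(f)` is the image context of `a` with the image of `f` substituted
into its hole. -/
mutual
def omapT {A B : Type} (α : A → OContext B) : OTree A → OForest B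
  | .node a f => (α a).subst (omapF α f)
def omapF {A B : Type} (α : A → OContext B) : OForest A → OForest B
  | .nil => .nil
  | .cons t f => (omapT α t).append (omapF α f)
end

/-- Quantifier-free first-order formulas with `k` variables, in the signature with a unary
label predicate for each letter and the strict ancestor order `x < y`. -/
inductive QFFormula (A : Type) (k : ℕ) : Type where
  | lab (a : A) (x : Fin k) : QFFormula A k
  | lt (x y : Fin k) : QFFormula A k
  | eq (x y : Fin k) : QFFormula A k
  | not (φ : QFFormula A k) : QFFormula A k
  | and (φ ψ : QFFormula A k) : QFFormula A k

/-- Satisfaction of a quantifier-free formula in a forest under the assignment `ρ` of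
nodes (paths) to variables: `lab a x` holds iff the node `ρ x` carries the label `a`, and
`lt x y` holds iff `ρ x` is a proper ancestor of `ρ y`. -/
def QFSat {A : Type} {k : ℕ} (f : OForest A) (ρ : Fin k → List ℕ) : QFFormula A k → Prop
  | .lab a x => f.labelAt (ρ x) = some a
  | .lt x y => ρ x <+: ρ y ∧ ρ x ≠ ρ y
  | .eq x y => ρ x = ρ y
  | .not φ => ¬ QFSat f ρ φ
  | .and φ ψ => QFSat f ρ φ ∧ QFSat f ρ ψ

/-- Satisfaction in the forest `f` of the sentence `∃x₁…xᵢ ∀y₁…yⱼ ψ`, where variables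
range over the nodes of `f`. -/
def SatSigma2 {A : Type} (f : OForest A) (i j : ℕ) (ψ : QFFormula A (i + j)) : Prop :=
  ∃ ρ : Fin i → List ℕ, (∀ k, (f.subtreeAt (ρ k)).isSome) ∧
    ∀ σ : Fin j → List ℕ, (∀ k, (f.subtreeAt (σ k)).isSome) →
      QFSat f (Fin.addCases ρ σ) ψ

/-- The tree `ba`: a root labeled `b` with a single child leaf labeled `a`. -/
def baTree {A : Type} (a b : A) : OTree A := .node b (.cons (.node a .nil) .nil)

/-- The forest `n(ba)` consisting of `n` copies of the tree `ba`. -/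
def nba {A : Type} (a b : A) : ℕ → OForest A
  | 0 => .nil
  | n + 1 => .cons (baTree a b) (nba a b n)

/-- The forest `n(ba) + a`: `n` copies of `ba` followed by a single leaf labeled `a`. -/
def nbaPlusA {A : Type} (a b : A) (n : ℕ) : OForest A :=
  (nba a b n).append (.cons (.node a .nil) .nil)

lemma OForest.toList_append {A : Type} (f g : OForest A) :
    (f.append g).toList = f.toList ++ g.toList := by
  match f with
  | .nil => rfl
  | .cons t f' => simp [OForest.append, OForest.toList, OForest.toList_append f' g]

lemma nba_toList {A : Type} (a b : A) (n : ℕ) :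
    (nba a b n).toList = List.replicate n (baTree a b) := by
  induction n with
  | zero => rfl
  | succ n ih => simp [nba, OForest.toList, ih, List.replicate_succ]

lemma subtreeAt_cons {A : Type} (f : OForest A) (k : ℕ) (p : List ℕ) :
    f.subtreeAt (k :: p) = (f.toList[k]?).bind (OTree.subtreeAt p) := by
  cases h : f.toList[k]? <;> simp [OForest.subtreeAt, h]

lemma ba_subtreeAt {A : Type} (a b : A) (p : List ℕ) :
    OTree.subtreeAt p (baTree a b) =
      if p = [] then some (baTree a b) else if p = [0] then some (.node a .nil) else none := by
  match p with
  | [] => rfl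
  | 0 :: [] => rfl
  | 0 :: r :: p'' => simp [OTree.subtreeAt, baTree, OTree.children, OForest.toList]
  | (q+1) :: p' => simp [OTree.subtreeAt, baTree, OTree.children, OForest.toList]

lemma leaf_subtreeAt {A : Type} (a : A) (p : List ℕ) :
    OTree.subtreeAt p (OTree.node a .nil) = if p = [] then some (.node a .nil) else none := by
  match p with
  | [] => rfl
  | q :: p' => simp [OTree.subtreeAt, OTree.children, OForest.toList]

lemma old_subtreeAt {A : Type} (a b : A) (n k : ℕ) (p : List ℕ) :
    (nba a b n).subtreeAt (k :: p) =
      if k < n then OTree.subtreeAt p (baTree a b) else none := by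
  rw [subtreeAt_cons, nba_toList]
  by_cases h : k < n <;> simp [List.getElem?_replicate, h]

lemma new_subtreeAt {A : Type} (a b : A) (n k : ℕ) (p : List ℕ) :
    (nbaPlusA a b n).subtreeAt (k :: p) =
      if k < n then OTree.subtreeAt p (baTree a b)
      else if k = n then OTree.subtreeAt p (.node a .nil) else none := by
  rw [nbaPlusA, subtreeAt_cons, OForest.toList_append, nba_toList, List.getElem?_append]
  simp only [List.length_replicate]
  rcases lt_trichotomy k n with h|h|h
  · simp [List.getElem?_replicate, h]
  · subst h
    simp [OForest.toList]
  · have h1 : ¬ k < n := by omega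
    have h2 : k ≠ n := by omega
    have h3 : (OForest.cons (OTree.node a OForest.nil) OForest.nil).toList[k-n]? = none := by
      rw [List.getElem?_eq_none]
      simp [OForest.toList]; omega
    simp [h1, h2, h3]

lemma rootLabel_baTree {A : Type} (a b : A) : (baTree a b).rootLabel = b := rfl

lemma rootLabel_leaf {A : Type} (a : A) : (OTree.node a OForest.nil).rootLabel = a := rfl

lemma old_valid {A : Type} (a b : A) (n : ℕ) (x : List ℕ)
    (h : ((nba a b n).subtreeAt x).isSome) : ∃ k, k < n ∧ (x = [k] ∨ x = [k, 0]) := by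
  match x with
  | [] => simp [OForest.subtreeAt] at h
  | k :: p =>
    rw [old_subtreeAt, ba_subtreeAt] at h
    by_cases hk : k < n
    · refine ⟨k, hk, ?_⟩
      by_cases h1 : p = []
      · left; rw [h1]
      · by_cases h2 : p = [0]
        · right; rw [h2]
        · simp [hk, h1, h2] at h
    · simp [hk] at h

lemma new_valid {A : Type} (a b : A) (n : ℕ) (x : List ℕ)
    (h : ((nbaPlusA a b n).subtreeAt x).isSome) :
    (∃ k, k < n ∧ (x = [k] ∨ x = [k, 0])) ∨ x = [n] := by
  match x with
  | [] => simp [OForest.subtreeAt] at h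
  | k :: p =>
    rw [new_subtreeAt, ba_subtreeAt, leaf_subtreeAt] at h
    by_cases hk : k < n
    · left
      refine ⟨k, hk, ?_⟩
      by_cases h1 : p = []
      · left; rw [h1]
      · by_cases h2 : p = [0]
        · right; rw [h2]
        · simp [hk, h1, h2] at h
    · by_cases hk2 : k = n
      · by_cases h1 : p = []
        · right; rw [h1, hk2]
        · simp [hk, hk2, h1] at h
      · simp [hk, hk2] at h

lemma key {A : Type} {k : ℕ} (a b : A) (n t : ℕ) (ht : t < n)
    (τ : Fin k → List ℕ)
    (hval : ∀ m, ((nbaPlusA a b n).subtreeAt (τ m)).isSome)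
    (hhead : ∀ m, (τ m).headI ≠ t)
    (ψ : QFFormula A k) :
    QFSat (nbaPlusA a b n) τ ψ ↔
      QFSat (nba a b n) (fun m => if τ m = [n] then [t, 0] else τ m) ψ := by
  set g : Fin k → List ℕ := fun m => if τ m = [n] then [t, 0] else τ m with hg
  have shape : ∀ m, (τ m = [n] ∧ g m = [t, 0]) ∨
      ∃ k', k' < n ∧ k' ≠ t ∧ ((τ m = [k'] ∧ g m = [k']) ∨ (τ m = [k', 0] ∧ g m = [k', 0])) := by
    intro m
    rcases new_valid a b n (τ m) (hval m) with ⟨k', hk', h1 | h1⟩ | h1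
    · have hne : τ m ≠ [n] := by simp [h1]; omega
      have hkt : k' ≠ t := by have := hhead m; simp [h1] at this; exact this
      exact Or.inr ⟨k', hk', hkt, Or.inl ⟨h1, by simp [hg, h1]; omega⟩⟩
    · have hne : τ m ≠ [n] := by simp [h1]
      have hkt : k' ≠ t := by have := hhead m; simp [h1] at this; exact this
      exact Or.inr ⟨k', hk', hkt, Or.inr ⟨h1, by simp [hg, h1]⟩⟩
    · exact Or.inl ⟨h1, by simp [hg, h1]⟩
  induction ψ with
  | lab c x =>
    simp only [QFSat]
    rcases shape x with ⟨hx, hx'⟩ | ⟨kx, hkx, hxt, ⟨hx, hx'⟩ | ⟨hx, hx'⟩⟩ <;> rw [hx, hx']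
    · simp [OForest.labelAt, new_subtreeAt, old_subtreeAt, ba_subtreeAt, leaf_subtreeAt,
        rootLabel_baTree, rootLabel_leaf, ht, lt_irrefl]
    · simp [OForest.labelAt, new_subtreeAt, old_subtreeAt, ba_subtreeAt, leaf_subtreeAt,
        rootLabel_baTree, rootLabel_leaf, hkx]
    · simp [OForest.labelAt, new_subtreeAt, old_subtreeAt, ba_subtreeAt, leaf_subtreeAt,
        rootLabel_baTree, rootLabel_leaf, hkx]
  | lt x y =>
    simp only [QFSat]
    rcases shape x with ⟨hx, hx'⟩ | ⟨kx, hkx, hxt, ⟨hx, hx'⟩ | ⟨hx, hx'⟩⟩ <;>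
      rcases shape y with ⟨hy, hy'⟩ | ⟨ky, hky, hyt, ⟨hy, hy'⟩ | ⟨hy, hy'⟩⟩ <;>
      rw [hx, hx', hy, hy'] <;>
      simp [List.cons_prefix_cons] <;> omega
  | eq x y =>
    simp only [QFSat]
    rcases shape x with ⟨hx, hx'⟩ | ⟨kx, hkx, hxt, ⟨hx, hx'⟩ | ⟨hx, hx'⟩⟩ <;>
      rcases shape y with ⟨hy, hy'⟩ | ⟨ky, hky, hyt, ⟨hy, hy'⟩ | ⟨hy, hy'⟩⟩ <;>
      rw [hx, hx', hy, hy'] <;>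
      simp <;> omega
  | not φ ih => exact not_congr ih
  | and φ χ ih1 ih2 => exact and_congr ih1 ih2

/-- for a sentence `φ = ∃x₁…xᵢ ∀y₁…yⱼ ψ` with `ψ` quantifier-free and
`n > i + j`, if the forest `n(ba)` satisfies `φ` then so does `n(ba) + a`. -/
theorem sigma2_pumping {A : Type} (a b : A) (i j : ℕ) (ψ : QFFormula A (i + j))
    (n : ℕ) (hn : n > i + j) (h : SatSigma2 (nba a b n) i j ψ) :
    SatSigma2 (nbaPlusA a b n) i j ψ := by
  obtain ⟨ρ, hρ, H⟩ := h
  have hρshape : ∀ k', ∃ m, m < n ∧ (ρ k' = [m] ∨ ρ k' = [m, 0]) :=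
    fun k' => old_valid a b n _ (hρ k')
  have hρnew : ∀ k', ((nbaPlusA a b n).subtreeAt (ρ k')).isSome := by
    intro k'
    obtain ⟨m, hm, h1 | h1⟩ := hρshape k' <;>
      simp [h1, new_subtreeAt, ba_subtreeAt, hm]
  refine ⟨ρ, hρnew, ?_⟩
  intro σ hσ
  set τ : Fin (i + j) → List ℕ := Fin.addCases ρ σ with hτ
  obtain ⟨t, ht1, ht2⟩ :
      ∃ t ∈ Finset.range n, t ∉ Finset.image (fun m => (τ m).headI) Finset.univ := by
    by_contra hc
    push_neg at hc
    have hsub : Finset.range n ⊆ Finset.image (fun m => (τ m).headI) Finset.univ :=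
      fun z hz => hc z hz
    have h1 := Finset.card_le_card hsub
    have h2 : (Finset.image (fun m => (τ m).headI) (Finset.univ : Finset (Fin (i + j)))).card ≤ i + j :=
      Finset.card_image_le.trans (le_of_eq (by simp))
    simp only [Finset.card_range] at h1
    omega
  rw [Finset.mem_range] at ht1
  have hhead : ∀ m, (τ m).headI ≠ t := by
    intro m he
    exact ht2 (Finset.mem_image.mpr ⟨m, Finset.mem_univ m, he⟩)
  have hvalτ : ∀ m, ((nbaPlusA a b n).subtreeAt (τ m)).isSome := by
    intro m
    refine Fin.addCases (motive := fun m => ((nbaPlusA a b n).subtreeAt (τ m)).isSome) ?_ ?_ m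
    · intro k'
      have e : τ (Fin.castAdd j k') = ρ k' := by simp [hτ]
      rw [e]; exact hρnew k'
    · intro k'
      have e : τ (Fin.natAdd i k') = σ k' := by simp [hτ]
      rw [e]; exact hσ k'
  have key' := key a b n t ht1 τ hvalτ hhead ψ
  set σ' : Fin j → List ℕ := fun m => if σ m = [n] then [t, 0] else σ m with hσ'
  have hσ'val : ∀ m, ((nba a b n).subtreeAt (σ' m)).isSome := by
    intro m
    by_cases hm : σ m = [n]
    · simp [hσ', hm, old_subtreeAt, ba_subtreeAt, ht1]
    · have e : σ' m = σ m := if_neg hm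
      rcases new_valid a b n _ (hσ m) with ⟨k', hk', h1 | h1⟩ | h1
      · simp [e, h1, old_subtreeAt, ba_subtreeAt, hk']
      · simp [e, h1, old_subtreeAt, ba_subtreeAt, hk']
      · exact absurd h1 hm
  have HH := H σ' hσ'val
  have efun : (fun m => if τ m = [n] then [t, 0] else τ m) = Fin.addCases ρ σ' := by
    funext m
    refine Fin.addCases
      (motive := fun m => (if τ m = [n] then [t, 0] else τ m) = Fin.addCases ρ σ' m) ?_ ?_ m
    · intro k'
      have e : τ (Fin.castAdd j k') = ρ k' := by simp [hτ]
      have hne : ρ k' ≠ [n] := by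
        obtain ⟨m', hm', h1 | h1⟩ := hρshape k' <;> rw [h1] <;> intro hcon <;>
          simp at hcon <;> omega
      rw [e, Fin.addCases_left, if_neg hne]
    · intro k'
      have e : τ (Fin.natAdd i k') = σ k' := by simp [hτ]
      rw [e, Fin.addCases_right, hσ']
  rw [key', efun]
  exact HH
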